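/- Let 0 ≤ x ≤ 1, y = √x (2+x)/(1+2x), and g(z) = z1 + √x · z2 on T^2. Then the orthogonal projection of |g|^2 g onto the Hardy space H^2(T^2) (i.e., retaining only Fourier modes z1^{a} z2^{b} with a, b ≥ 0) equals (1 + 2x)(z1 + y z2). Concretely: P(|g|^2 g)(z) = (1+x) g(z) + x z1 + √x z2 = (1+2x)(z1 + √x (2+x)/(1+2x) · z2). -/

import Mathlib

open scoped Real

/-- The `(a,b)` Fourier coefficient of a function on the 2-torus, parametrized by angles. -/
noncomputable def fourierCoef (h : ℝ → ℝ → ℂ) (a b : ℤ) : ℂ :=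
  (1 / (2 * π) ^ 2 : ℂ) * ∫ θ₁ in (0:ℝ)..(2 * π), ∫ θ₂ in (0:ℝ)..(2 * π),
    h θ₁ θ₂ * Complex.exp (-Complex.I * ((a : ℂ) * θ₁ + (b : ℂ) * θ₂))

/-- The Riesz projection on the 2-torus: keep only the Fourier modes with both
indices nonnegative. -/
noncomputable def rieszProj (h : ℝ → ℝ → ℂ) (θ₁ θ₂ : ℝ) : ℂ :=
  ∑' q : ℕ × ℕ, fourierCoef h q.1 q.2 *
    Complex.exp (Complex.I * ((q.1 : ℂ) * θ₁ + (q.2 : ℂ) * θ₂))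

section aux

open Complex intervalIntegral MeasureTheory

lemma intExp (k : ℤ) : (∫ θ in (0:ℝ)..(2*π), Complex.exp (Complex.I * k * θ)) =
    if k = 0 then ((2*π : ℝ) : ℂ) else 0 := by
  rcases eq_or_ne k 0 with hk | hk
  · simp [hk]
  · rw [if_neg hk]
    have hc : (Complex.I * (k:ℂ)) ≠ 0 :=
      mul_ne_zero Complex.I_ne_zero (by exact_mod_cast hk)
    have h := integral_exp_mul_complex (a := (0:ℝ)) (b := 2*π) hc
    have h1 : Complex.exp (Complex.I * (k:ℂ) * ((2*π:ℝ):ℂ)) = 1 := by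
      rw [show Complex.I * (k:ℂ) * ((2*π:ℝ):ℂ) = (k:ℤ) * (2*π*Complex.I) by push_cast; ring]
      exact Complex.exp_int_mul_two_pi_mul_I k
    simp only [mul_assoc] at h ⊢
    rw [h]
    rw [mul_assoc] at h1
    rw [h1]
    simp

lemma coef_single (c : ℂ) (m n a b : ℤ) :
    fourierCoef (fun t₁ t₂ => c * (Complex.exp (Complex.I * (m:ℂ) * t₁) *
      Complex.exp (Complex.I * (n:ℂ) * t₂))) a b = if a = m ∧ b = n then c else 0 := by
  unfold fourierCoef
  have key : ∀ (t₁ t₂ : ℝ),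
      c * (Complex.exp (Complex.I * (m:ℂ) * t₁) * Complex.exp (Complex.I * (n:ℂ) * t₂)) *
        Complex.exp (-Complex.I * ((a : ℂ) * t₁ + (b : ℂ) * t₂))
        = (c * Complex.exp (Complex.I * ((m - a : ℤ):ℂ) * t₁)) *
          Complex.exp (Complex.I * ((n - b : ℤ):ℂ) * t₂) := by
    intro t₁ t₂
    rw [mul_assoc c, mul_assoc c, ← Complex.exp_add, mul_assoc, ← Complex.exp_add,
      ← Complex.exp_add]
    congr 2
    push_cast
    ring
  simp only [key]
  have inner : ∀ t₁ : ℝ, (∫ t₂ in (0:ℝ)..(2*π),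
      (c * Complex.exp (Complex.I * ((m - a : ℤ):ℂ) * t₁)) *
        Complex.exp (Complex.I * ((n - b : ℤ):ℂ) * t₂))
      = (c * (if n - b = 0 then ((2*π : ℝ) : ℂ) else 0)) *
          Complex.exp (Complex.I * ((m - a : ℤ):ℂ) * t₁) := by
    intro t₁
    rw [intervalIntegral.integral_const_mul, intExp]
    ring
  simp only [inner]
  rw [intervalIntegral.integral_const_mul, intExp]
  have hπ : (π:ℂ) ≠ 0 := by exact_mod_cast Real.pi_ne_zero
  by_cases h1 : a = m <;> by_cases h2 : b = n
  · have e1 : m - a = 0 := by omega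
    have e2 : n - b = 0 := by omega
    simp only [e1, e2, if_pos rfl, h1, h2, and_self, if_true]
    push_cast
    rw [sub_self, sub_self, if_pos rfl]
    field_simp
  · have : ¬ (n - b = 0) := by omega
    simp [this, h2]
  · have : ¬ (m - a = 0) := by omega
    simp [this, h1]
  · have : ¬ (m - a = 0) := by omega
    simp [this, h1]

lemma cont_exp_factor (a b : ℤ) :
    Continuous (fun p : ℝ × ℝ => Complex.exp (-Complex.I * ((a : ℂ) * p.1 + (b : ℂ) * p.2))) := by
  fun_prop

lemma coef_add (h₁ h₂ : ℝ → ℝ → ℂ) (hc₁ : Continuous fun p : ℝ × ℝ => h₁ p.1 p.2)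
    (hc₂ : Continuous fun p : ℝ × ℝ => h₂ p.1 p.2) (a b : ℤ) :
    fourierCoef (fun t₁ t₂ => h₁ t₁ t₂ + h₂ t₁ t₂) a b
      = fourierCoef h₁ a b + fourierCoef h₂ a b := by
  unfold fourierCoef
  rw [← mul_add]
  congr 1
  have g₁ : Continuous fun p : ℝ × ℝ =>
      h₁ p.1 p.2 * Complex.exp (-Complex.I * ((a : ℂ) * p.1 + (b : ℂ) * p.2)) :=
    hc₁.mul (cont_exp_factor a b)
  have g₂ : Continuous fun p : ℝ × ℝ =>
      h₂ p.1 p.2 * Complex.exp (-Complex.I * ((a : ℂ) * p.1 + (b : ℂ) * p.2)) :=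
    hc₂.mul (cont_exp_factor a b)
  have inner : ∀ t₁ : ℝ, (∫ t₂ in (0:ℝ)..(2*π),
      (h₁ t₁ t₂ + h₂ t₁ t₂) * Complex.exp (-Complex.I * ((a : ℂ) * t₁ + (b : ℂ) * t₂)))
      = (∫ t₂ in (0:ℝ)..(2*π),
          h₁ t₁ t₂ * Complex.exp (-Complex.I * ((a : ℂ) * t₁ + (b : ℂ) * t₂)))
        + ∫ t₂ in (0:ℝ)..(2*π),
          h₂ t₁ t₂ * Complex.exp (-Complex.I * ((a : ℂ) * t₁ + (b : ℂ) * t₂)) := by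
    intro t₁
    rw [← intervalIntegral.integral_add]
    · congr 1; funext t₂; ring
    · exact ((g₁.comp (by fun_prop : Continuous fun t₂ : ℝ => ((t₁, t₂) : ℝ × ℝ))).intervalIntegrable _ _)
    · exact ((g₂.comp (by fun_prop : Continuous fun t₂ : ℝ => ((t₁, t₂) : ℝ × ℝ))).intervalIntegrable _ _)
  simp only [inner]
  rw [intervalIntegral.integral_add]
  · exact (continuous_parametric_intervalIntegral_of_continuous' (f := fun t₁ t₂ =>
      h₁ t₁ t₂ * Complex.exp (-Complex.I * ((a : ℂ) * t₁ + (b : ℂ) * t₂)))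
      (by exact g₁) 0 (2*π)).intervalIntegrable _ _
  · exact (continuous_parametric_intervalIntegral_of_continuous' (f := fun t₁ t₂ =>
      h₂ t₁ t₂ * Complex.exp (-Complex.I * ((a : ℂ) * t₁ + (b : ℂ) * t₂)))
      (by exact g₂) 0 (2*π)).intervalIntegrable _ _

end aux

theorem stmt7 (x : ℝ) (hx : x ∈ Set.Icc (0:ℝ) 1) (θ₁ θ₂ : ℝ) :
    rieszProj (fun t₁ t₂ =>
        ((‖Complex.exp (Complex.I * t₁)
            + (Real.sqrt x : ℂ) * Complex.exp (Complex.I * t₂)‖ : ℝ) : ℂ) ^ 2 *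
          (Complex.exp (Complex.I * t₁)
            + (Real.sqrt x : ℂ) * Complex.exp (Complex.I * t₂))) θ₁ θ₂
      = (1 + 2 * x : ℂ) * (Complex.exp (Complex.I * θ₁) +
          ((Real.sqrt x * (2 + x) / (1 + 2 * x) : ℝ) : ℂ) * Complex.exp (Complex.I * θ₂)) := by
  obtain ⟨hx0, hx1⟩ := hx
  set s : ℝ := Real.sqrt x with hs
  have hxs : (x : ℂ) = (s : ℂ) ^ 2 := by
    rw [hs]
    norm_cast
    rw [Real.sq_sqrt hx0]
  -- the four exponential terms
  have hdecomp : (fun t₁ t₂ : ℝ =>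
      ((‖Complex.exp (Complex.I * t₁)
          + (s : ℂ) * Complex.exp (Complex.I * t₂)‖ : ℝ) : ℂ) ^ 2 *
        (Complex.exp (Complex.I * t₁) + (s : ℂ) * Complex.exp (Complex.I * t₂)))
      = fun t₁ t₂ : ℝ =>
        ((1 + 2*x : ℂ) * (Complex.exp (Complex.I * ((1:ℤ):ℂ) * t₁) *
            Complex.exp (Complex.I * ((0:ℤ):ℂ) * t₂))
          + ((s:ℂ) * (2 + x)) * (Complex.exp (Complex.I * ((0:ℤ):ℂ) * t₁) *
            Complex.exp (Complex.I * ((1:ℤ):ℂ) * t₂)))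
          + ((s:ℂ) * (Complex.exp (Complex.I * ((2:ℤ):ℂ) * t₁) *
            Complex.exp (Complex.I * ((-1:ℤ):ℂ) * t₂))
            + (x:ℂ) * (Complex.exp (Complex.I * ((-1:ℤ):ℂ) * t₁) *
              Complex.exp (Complex.I * ((2:ℤ):ℂ) * t₂))) := by
    funext t₁ t₂
    set u : ℂ := Complex.exp (Complex.I * t₁) with hu
    set v : ℂ := Complex.exp (Complex.I * t₂) with hv
    have hu0 : u ≠ 0 := Complex.exp_ne_zero _
    have hv0 : v ≠ 0 := Complex.exp_ne_zero _
    have habs : ((‖u + (s:ℂ) * v‖ : ℝ) : ℂ) ^ 2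
        = (u + (s:ℂ) * v) * ((starRingEnd ℂ) (u + (s:ℂ) * v)) := by
      rw [← Complex.ofReal_pow, Complex.sq_norm]
      exact (Complex.mul_conj _).symm
    have hconj : (starRingEnd ℂ) (u + (s:ℂ) * v) = u⁻¹ + (s:ℂ) * v⁻¹ := by
      rw [map_add, map_mul, Complex.conj_ofReal, hu, hv, ← Complex.exp_conj,
        ← Complex.exp_conj]
      simp [Complex.exp_neg]
    have e2a : Complex.exp (Complex.I * ((2:ℤ):ℂ) * t₁) = u ^ 2 := by
      rw [hu, ← Complex.exp_nat_mul]
      congr 1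
      push_cast
      ring
    have e2b : Complex.exp (Complex.I * ((2:ℤ):ℂ) * t₂) = v ^ 2 := by
      rw [hv, ← Complex.exp_nat_mul]
      congr 1
      push_cast
      ring
    have ema : Complex.exp (Complex.I * ((-1:ℤ):ℂ) * t₁) = u⁻¹ := by
      rw [hu, ← Complex.exp_neg]
      congr 1
      push_cast
      ring
    have emb : Complex.exp (Complex.I * ((-1:ℤ):ℂ) * t₂) = v⁻¹ := by
      rw [hv, ← Complex.exp_neg]
      congr 1
      push_cast
      ring
    have e1a : Complex.exp (Complex.I * ((1:ℤ):ℂ) * t₁) = u := by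
      rw [hu]; congr 1; push_cast; ring
    have e1b : Complex.exp (Complex.I * ((1:ℤ):ℂ) * t₂) = v := by
      rw [hv]; congr 1; push_cast; ring
    have e0a : Complex.exp (Complex.I * ((0:ℤ):ℂ) * t₁) = 1 := by
      rw [show Complex.I * ((0:ℤ):ℂ) * t₁ = 0 by push_cast; ring, Complex.exp_zero]
    have e0b : Complex.exp (Complex.I * ((0:ℤ):ℂ) * t₂) = 1 := by
      rw [show Complex.I * ((0:ℤ):ℂ) * t₂ = 0 by push_cast; ring, Complex.exp_zero]
    rw [habs, hconj, e2a, e2b, ema, emb, e1a, e1b, e0a, e0b, hxs]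
    field_simp
    ring
  rw [hdecomp]
  -- Fourier coefficients of the decomposed function
  have hcoef : ∀ a b : ℤ, fourierCoef (fun t₁ t₂ : ℝ =>
        ((1 + 2*x : ℂ) * (Complex.exp (Complex.I * ((1:ℤ):ℂ) * t₁) *
            Complex.exp (Complex.I * ((0:ℤ):ℂ) * t₂))
          + ((s:ℂ) * (2 + x)) * (Complex.exp (Complex.I * ((0:ℤ):ℂ) * t₁) *
            Complex.exp (Complex.I * ((1:ℤ):ℂ) * t₂)))
          + ((s:ℂ) * (Complex.exp (Complex.I * ((2:ℤ):ℂ) * t₁) *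
            Complex.exp (Complex.I * ((-1:ℤ):ℂ) * t₂))
            + (x:ℂ) * (Complex.exp (Complex.I * ((-1:ℤ):ℂ) * t₁) *
              Complex.exp (Complex.I * ((2:ℤ):ℂ) * t₂)))) a b
      = (if a = 1 ∧ b = 0 then (1 + 2*x : ℂ) else 0)
        + (if a = 0 ∧ b = 1 then ((s:ℂ) * (2 + x)) else 0)
        + ((if a = 2 ∧ b = -1 then (s:ℂ) else 0)
          + (if a = -1 ∧ b = 2 then (x:ℂ) else 0)) := by
    intro a b
    rw [coef_add _ _ (by fun_prop) (by fun_prop), coef_add _ _ (by fun_prop) (by fun_prop),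
      coef_add _ _ (by fun_prop) (by fun_prop), coef_single, coef_single, coef_single,
      coef_single]
  unfold rieszProj
  rw [tsum_eq_sum (s := ({(1,0), (0,1)} : Finset (ℕ × ℕ)))
    (f := fun q : ℕ × ℕ => fourierCoef _ q.1 q.2 *
      Complex.exp (Complex.I * ((q.1 : ℂ) * θ₁ + (q.2 : ℂ) * θ₂)))]
  · rw [Finset.sum_insert (by decide), Finset.sum_singleton]
    rw [hcoef, hcoef]
    norm_num
    have h12 : (1 + 2 * (x:ℂ)) ≠ 0 := by
      rw [show (1 + 2 * (x:ℂ)) = ((1 + 2 * x : ℝ) : ℂ) by push_cast; ring]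
      rw [Complex.ofReal_ne_zero]
      positivity
    field_simp
  · intro q hq
    rw [hcoef]
    have hq1 : ¬((q.1 : ℤ) = 1 ∧ (q.2 : ℤ) = 0) := by
      intro ⟨ha, hb⟩
      apply hq
      have : q = (1, 0) := by
        have h1 : q.1 = 1 := by exact_mod_cast ha
        have h2 : q.2 = 0 := by exact_mod_cast hb
        exact Prod.ext h1 h2
      simp [this]
    have hq2 : ¬((q.1 : ℤ) = 0 ∧ (q.2 : ℤ) = 1) := by
      intro ⟨ha, hb⟩
      apply hq
      have : q = (0, 1) := by
        have h1 : q.1 = 0 := by exact_mod_cast ha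
        have h2 : q.2 = 1 := by exact_mod_cast hb
        exact Prod.ext h1 h2
      simp [this]
    have hq3 : ¬((q.1 : ℤ) = 2 ∧ (q.2 : ℤ) = -1) := by
      rintro ⟨-, hb⟩
      omega
    have hq4 : ¬((q.1 : ℤ) = -1 ∧ (q.2 : ℤ) = 2) := by
      rintro ⟨ha, -⟩
      omega
    have n1 : ¬(q.1 = 1 ∧ q.2 = 0) := fun ⟨a,b⟩ => hq1 ⟨by exact_mod_cast a, by exact_mod_cast b⟩
    have n2 : ¬(q.1 = 0 ∧ q.2 = 1) := fun ⟨a,b⟩ => hq2 ⟨by exact_mod_cast a, by exact_mod_cast b⟩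
    simp [hq1, hq2, hq3, hq4, n1, n2]
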